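/- There exists a constant α with 0 < α < 1/2 such that for all d ≥ 2 and all z with 0 ≤ z/√d < π/2, the function A(z/√d) = −√d·cos^{d−1}(z/√d)·sin(z/√d) satisfies |A(z/√d)| ≤ z·exp(−α z²). -/

import Mathlib

open Real

/-- There is `0 < α < 1/2` such that for all `d ≥ 2` and `0 ≤ z` with
`z/√d < π/2`, `|A(z/√d)| = |−√d cos^{d-1}(z/√d) sin(z/√d)| ≤ z exp(−α z²)`. -/
theorem bound_A :
    ∃ α : ℝ, 0 < α ∧ α < 1 / 2 ∧ ∀ d : ℕ, 2 ≤ d → ∀ z : ℝ, 0 ≤ z →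
      z / Real.sqrt d < π / 2 →
      |-Real.sqrt d * Real.cos (z / Real.sqrt d) ^ (d - 1) * Real.sin (z / Real.sqrt d)| ≤
        z * Real.exp (-α * z ^ 2) := by
  refine ⟨1/10, by norm_num, by norm_num, ?_⟩
  intro d hd z hz hlt
  have hd0 : (0:ℝ) < d := by positivity
  have hsd : (0:ℝ) < Real.sqrt d := Real.sqrt_pos.mpr hd0
  set θ : ℝ := z / Real.sqrt d with hθdef
  have hθ0 : 0 ≤ θ := div_nonneg hz hsd.le
  have hθπ : θ < π / 2 := hlt
  have hcos0 : 0 ≤ Real.cos θ :=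
    Real.cos_nonneg_of_mem_Icc ⟨by linarith [Real.pi_pos, hθ0], hθπ.le⟩
  have hsin0 : 0 ≤ Real.sin θ := Real.sin_nonneg_of_nonneg_of_le_pi hθ0
    (by linarith [Real.pi_pos, hθπ])
  have hX : 0 ≤ Real.sqrt d * Real.cos θ ^ (d-1) * Real.sin θ := by positivity
  have habs : |-Real.sqrt d * Real.cos θ ^ (d-1) * Real.sin θ|
      = Real.sqrt d * Real.cos θ ^ (d-1) * Real.sin θ := by
    rw [show -Real.sqrt d * Real.cos θ ^ (d-1) * Real.sin θ
        = -(Real.sqrt d * Real.cos θ ^ (d-1) * Real.sin θ) by ring, abs_neg,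
      abs_of_nonneg hX]
  rw [habs]
  -- √d * sin θ ≤ z
  have hsin_le : Real.sqrt d * Real.sin θ ≤ z := by
    have := Real.sin_le hθ0
    calc Real.sqrt d * Real.sin θ ≤ Real.sqrt d * θ := by nlinarith
    _ = z := by rw [hθdef]; field_simp
  -- cos θ ≤ exp (-(2/π^2) θ^2)
  have hπ : |θ| ≤ π := by
    rw [abs_of_nonneg hθ0]; linarith [Real.pi_pos]
  have hcos_bound : Real.cos θ ≤ 1 - 2 / π ^ 2 * θ ^ 2 :=
    Real.cos_le_one_sub_mul_cos_sq hπ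
  have hexp : Real.cos θ ≤ Real.exp (-(2 / π ^ 2 * θ ^ 2)) := by
    have := Real.add_one_le_exp (-(2 / π ^ 2 * θ ^ 2))
    linarith
  have hpow : Real.cos θ ^ (d-1) ≤ Real.exp (-(2 / π ^ 2 * θ ^ 2)) ^ (d-1) :=
    pow_le_pow_left₀ hcos0 hexp _
  have hpi2 : π ^ 2 < 10 := by nlinarith [Real.pi_lt_d2, Real.pi_pos]
  have hπ0 : (0:ℝ) < π ^ 2 := by positivity
  have hkey : Real.exp (-(2 / π ^ 2 * θ ^ 2)) ^ (d-1)
      ≤ Real.exp (-(1/10) * z ^ 2) := by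
    rw [← Real.exp_nat_mul]
    apply Real.exp_le_exp.mpr
    have hθsq : θ ^ 2 = z ^ 2 / d := by
      rw [hθdef, div_pow, Real.sq_sqrt hd0.le]
    have hcast : ((d-1 : ℕ) : ℝ) = (d:ℝ) - 1 := by
      have h1 : (1:ℕ) ≤ d := by omega
      push_cast [Nat.cast_sub h1]; ring
    rw [hθsq, hcast]
    have hd2 : (2:ℝ) ≤ (d:ℝ) := by exact_mod_cast hd
    have e : ((d:ℝ)-1) * -(2 / π ^ 2 * (z ^ 2 / d))
        = -(((d:ℝ)-1) * 2 * z ^ 2 / (π ^ 2 * d)) := by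
      field_simp
    rw [e, neg_mul, neg_le_neg_iff, le_div_iff₀ (by positivity)]
    have h10 : π ^ 2 * (d:ℝ) ≤ 20 * ((d:ℝ) - 1) := by nlinarith
    nlinarith [mul_le_mul_of_nonneg_left h10 (sq_nonneg z)]
  have hE0 : 0 < Real.exp (-(1/10) * z ^ 2) := Real.exp_pos _
  have hC : Real.cos θ ^ (d-1) ≤ Real.exp (-(1/10) * z ^ 2) := hpow.trans hkey
  calc Real.sqrt d * Real.cos θ ^ (d-1) * Real.sin θ
      = (Real.sqrt d * Real.sin θ) * Real.cos θ ^ (d-1) := by ring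
    _ ≤ (Real.sqrt d * Real.sin θ) * Real.exp (-(1/10) * z ^ 2) :=
        mul_le_mul_of_nonneg_left hC (mul_nonneg hsd.le hsin0)
    _ ≤ z * Real.exp (-(1/10) * z ^ 2) :=
        mul_le_mul_of_nonneg_right hsin_le hE0.le
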